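/- Let M be a complex subgroup of (ℂ*)^{2k} isomorphic to ℂ^k with dim_ℝ(M ∩ (S¹)^{2k}) = 0. Then the Zariski closure of M equals (ℂ*)^{2k}. -/
import Mathlib

open Complex

/-- Pointwise complex conjugation as an `ℝ`-linear equivalence on `Fin n → ℂ`. -/
noncomputable def stmt6Conj (n : ℕ) : (Fin n → ℂ) ≃ₗ[ℝ] (Fin n → ℂ) where
  toFun x i := (starRingEnd ℂ) (x i)
  invFun x i := (starRingEnd ℂ) (x i)
  left_inv x := by funext i; simp
  right_inv x := by funext i; simp
  map_add' x y := by funext i; simp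
  map_smul' r x := by
    funext i
    simp [Complex.real_smul]

/-- The character `v ↦ exp (∑ i, m i * v i)` on the additive group `V`. -/
noncomputable def stmt6Chi {n : ℕ} (V : Submodule ℂ (Fin n → ℂ)) (m : Fin n →₀ ℕ) :
    Multiplicative V →* ℂ where
  toFun v := Complex.exp (∑ i, (m i : ℂ) * ((Multiplicative.toAdd v : V) : Fin n → ℂ) i)
  map_one' := by
    have : (Multiplicative.toAdd (1 : Multiplicative V) : V) = 0 := rfl
    simp [this]
  map_mul' a b := by
    have key : ∑ i, (m i : ℂ) * ((Multiplicative.toAdd (a * b) : V) : Fin n → ℂ) i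
        = (∑ i, (m i : ℂ) * ((Multiplicative.toAdd a : V) : Fin n → ℂ) i)
          + ∑ i, (m i : ℂ) * ((Multiplicative.toAdd b : V) : Fin n → ℂ) i := by
      rw [← Finset.sum_add_distrib]
      apply Finset.sum_congr rfl
      intro i _
      have h : ((Multiplicative.toAdd (a * b) : V) : Fin n → ℂ) i
          = ((Multiplicative.toAdd a : V) : Fin n → ℂ) i
            + ((Multiplicative.toAdd b : V) : Fin n → ℂ) i := rfl
      rw [h]; ring
    show Complex.exp _ = Complex.exp _ * Complex.exp _
    rw [key, Complex.exp_add]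

theorem stmt6 (k : ℕ) (V : Submodule ℂ (Fin (2 * k) → ℂ))
    (hdim : Module.finrank ℂ V = k)
    (hinj : Set.InjOn (fun v : Fin (2 * k) → ℂ => fun i => Complex.exp (v i)) V)
    (htorus : ∀ v ∈ V, (∀ i, (v i).re = 0) → v = 0)
    (p : MvPolynomial (Fin (2 * k)) ℂ)
    (hvanish : ∀ v ∈ V, MvPolynomial.eval (fun i => Complex.exp (v i)) p = 0) :
    ∀ x : Fin (2 * k) → ℂ, (∀ i, x i ≠ 0) → MvPolynomial.eval x p = 0 := by
  suffices hp : p = 0 by intro x hx; simp [hp]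
  -- Step A: distinct monomial exponents give distinct linear functionals on `V`.
  have keyA : ∀ m m' : Fin (2 * k) →₀ ℕ,
      (∀ v ∈ V, ∑ i, (m i : ℂ) * v i = ∑ i, (m' i : ℂ) * v i) → m = m' := by
    intro m m' h
    set n : Fin (2 * k) → ℝ := fun i => (m i : ℝ) - (m' i : ℝ) with hn
    have hn0 : ∀ v ∈ V, ∑ i, (n i : ℂ) * v i = 0 := by
      intro v hv
      have h1 := h v hv
      have : ∀ i, (n i : ℂ) * v i = (m i : ℂ) * v i - (m' i : ℂ) * v i := by
        intro i; simp [hn]; push_cast; ring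
      simp only [this, Finset.sum_sub_distrib, h1, sub_self]
    set V' : Submodule ℝ (Fin (2 * k) → ℂ) := V.restrictScalars ℝ with hV'
    set Vc : Submodule ℝ (Fin (2 * k) → ℂ) := V'.map (stmt6Conj (2 * k)).toLinearMap with hVc
    -- the intersection is trivial
    have hinf : V' ⊓ Vc = ⊥ := by
      rw [Submodule.eq_bot_iff]
      rintro x ⟨hx1, hx2⟩
      obtain ⟨y, hy, hxy⟩ := hx2
      have hxV : x ∈ V := hx1
      have hyV : y ∈ V := hy
      have hcoord : ∀ i, x i = (starRingEnd ℂ) (y i) := by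
        intro i; exact (congrFun hxy i).symm
      have hu : x + y ∈ V := V.add_mem hxV hyV
      have hIu : Complex.I • (x + y) ∈ V := V.smul_mem _ hu
      have him : ∀ i, ((Complex.I • (x + y)) i).re = 0 := by
        intro i
        have : (x i).im + (y i).im = 0 := by
          rw [hcoord i]; simp
        simp [Complex.add_im, this]
      have h0 : Complex.I • (x + y) = 0 := htorus _ hIu him
      have hxy0 : x + y = 0 := by
        rcases smul_eq_zero.mp h0 with h | h
        · exact absurd h Complex.I_ne_zero
        · exact h
      have hyx : y = -x := by
        have h := hxy0; rw [add_comm] at h; exact eq_neg_of_add_eq_zero_left h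
      have hre : ∀ i, (x i).re = 0 := by
        intro i
        have := hcoord i
        rw [hyx] at this
        have : (x i) = -(starRingEnd ℂ) (x i) := by simpa using this
        have h2 := congrArg Complex.re this
        simp at h2
        linarith
      exact htorus x hxV hre
    -- dimension count
    have hV'rank : Module.finrank ℝ V' = 2 * k := by
      have e : ↥(V.restrictScalars ℝ) ≃ₗ[ℝ] ↥V :=
        (Submodule.restrictScalarsEquiv ℝ ℂ (Fin (2 * k) → ℂ) V).restrictScalars ℝ
      rw [hV', e.finrank_eq]
      have := Module.finrank_mul_finrank ℝ ℂ V
      rw [Complex.finrank_real_complex, hdim] at this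
      omega
    have hVcrank : Module.finrank ℝ Vc = 2 * k := by
      rw [hVc, LinearEquiv.finrank_map_eq, hV'rank]
    have hErank : Module.finrank ℝ (Fin (2 * k) → ℂ) = 4 * k := by
      rw [Module.finrank_pi_fintype ℝ]
      simp [Complex.finrank_real_complex]
      ring
    have hsup : V' ⊔ Vc = ⊤ := by
      apply Submodule.eq_top_of_finrank_eq
      have := Submodule.finrank_sup_add_finrank_inf_eq V' Vc
      rw [hinf, hV'rank, hVcrank, finrank_bot] at this
      rw [hErank]; omega
    -- the functional
    set φ : (Fin (2 * k) → ℂ) →ₗ[ℝ] ℂ :=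
      { toFun := fun w => ∑ i, (n i : ℂ) * w i
        map_add' := fun w₁ w₂ => by
          simp [mul_add, Finset.sum_add_distrib]
        map_smul' := fun r w => by
          simp only [Pi.smul_apply, RingHom.id_apply, Complex.real_smul, Finset.mul_sum]
          exact Finset.sum_congr rfl fun i _ => by ring } with hφdef
    have hker : V' ⊔ Vc ≤ LinearMap.ker φ := by
      apply sup_le
      · intro v hv
        exact hn0 v hv
      · rintro w hw
        obtain ⟨v, hv, rfl⟩ := hw
        have hvV : v ∈ V := hv
        simp only [LinearMap.mem_ker]
        have e1 : φ ((stmt6Conj (2 * k)).toLinearMap v)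
            = ∑ i, (n i : ℂ) * (starRingEnd ℂ) (v i) := rfl
        have e2 : ∑ i, (n i : ℂ) * (starRingEnd ℂ) (v i)
            = (starRingEnd ℂ) (∑ i, (n i : ℂ) * v i) := by
          rw [map_sum]
          exact Finset.sum_congr rfl fun i _ => by simp
        rw [e1, e2, hn0 v hvV, map_zero]
    have hφ0 : φ = 0 := by
      rw [hsup] at hker
      exact LinearMap.ker_eq_top.mp (top_unique hker)
    have hnz : ∀ j, n j = 0 := by
      intro j
      have h1 : φ (Pi.single j (1 : ℂ)) = 0 := by rw [hφ0]; rfl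
      have h2 : φ (Pi.single j (1 : ℂ)) = (n j : ℂ) := by
        simp only [hφdef, LinearMap.coe_mk, AddHom.coe_mk]
        rw [Finset.sum_eq_single j]
        · simp
        · intro i _ hij; simp [Pi.single_apply, hij]
        · intro hj; exact absurd (Finset.mem_univ j) hj
      rw [h2] at h1
      exact_mod_cast h1
    ext i
    have := hnz i
    have : (m i : ℝ) = (m' i : ℝ) := by simp [hn] at this; linarith
    exact_mod_cast this
  -- Step B: the characters are injective
  have chiInj : Function.Injective (stmt6Chi V) := by
    intro m m' hmm
    apply keyA m m'
    intro v hv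
    by_contra hne
    set a : ℂ := ∑ i, (m i : ℂ) * v i with ha
    set b : ℂ := ∑ i, (m' i : ℂ) * v i with hb
    have hab : a - b ≠ 0 := sub_ne_zero.mpr hne
    set t : ℂ := (Real.pi * Complex.I) / (a - b) with ht
    have htv : t • v ∈ V := V.smul_mem t hv
    have h1 := DFunLike.congr_fun hmm (Multiplicative.ofAdd (⟨t • v, htv⟩ : V))
    have hs : ∀ (q : Fin (2 * k) →₀ ℕ),
        ∑ i, (q i : ℂ) * (t * v i) = t * ∑ i, (q i : ℂ) * v i := by
      intro q
      rw [Finset.mul_sum]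
      exact Finset.sum_congr rfl fun i _ => by ring
    have h2 : Complex.exp (t * a) = Complex.exp (t * b) := by
      have h1' : Complex.exp (∑ i, (m i : ℂ) * (t * v i))
          = Complex.exp (∑ i, (m' i : ℂ) * (t * v i)) := by
        simpa [stmt6Chi] using h1
      rw [hs m, hs m'] at h1'
      exact h1'
    have h3 : Complex.exp (t * a - t * b) = 1 := by
      rw [Complex.exp_sub, h2, div_self (Complex.exp_ne_zero _)]
    have h4 : t * a - t * b = Real.pi * Complex.I := by
      rw [← mul_sub, ht, div_mul_cancel₀ _ hab]
    rw [h4, Complex.exp_pi_mul_I] at h3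
    norm_num at h3
  -- Step C: linear independence of characters forces all coefficients to vanish
  have li : LinearIndependent ℂ (fun m : Fin (2 * k) →₀ ℕ => ⇑(stmt6Chi V m)) :=
    (linearIndependent_monoidHom (Multiplicative V) ℂ).comp (stmt6Chi V) chiInj
  have hsum : ∑ m ∈ p.support, p.coeff m • ⇑(stmt6Chi V m) = 0 := by
    funext v
    simp only [Finset.sum_apply, Pi.smul_apply, Pi.zero_apply, smul_eq_mul]
    set w : Fin (2 * k) → ℂ := ((Multiplicative.toAdd v : V) : Fin (2 * k) → ℂ) with hw
    have hwV : w ∈ V := (Multiplicative.toAdd v : V).2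
    have hev := hvanish w hwV
    rw [MvPolynomial.eval_eq'] at hev
    rw [← hev]
    refine Finset.sum_congr rfl fun m _ => ?_
    congr 1
    show Complex.exp (∑ i, (m i : ℂ) * w i) = ∏ i, Complex.exp (w i) ^ m i
    rw [Complex.exp_sum]
    exact Finset.prod_congr rfl fun i _ => Complex.exp_nat_mul (w i) (m i)
  have hcoeff := linearIndependent_iff'.mp li p.support (fun m => p.coeff m) hsum
  apply MvPolynomial.ext
  intro m
  rw [MvPolynomial.coeff_zero]
  by_cases hm : m ∈ p.support
  · exact hcoeff m hm
  · exact MvPolynomial.notMem_support_iff.mp hm
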